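/- The sequence of ratios dp(P_{n+1},2) / dp(P_n,2) converges as n → ∞ to the golden ratio (1+√5)/2, where dp(P_n,2) is the number of domatic partitions of the path P_n with exactly 2 parts. -/

import Mathlib

/-- `S` is a dominating set of `G`: every vertex outside `S` has a neighbor in `S`. -/
def IsDominating {V : Type*} (G : SimpleGraph V) (S : Set V) : Prop :=
  ∀ v, v ∉ S → ∃ u ∈ S, G.Adj v u

/-- A domatic partition of `G`: a partition of the vertex set into
(pairwise disjoint, nonempty) dominating sets. -/
def IsDomaticPartition {V : Type*} (G : SimpleGraph V) (P : Set (Set V)) : Prop :=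
  Setoid.IsPartition P ∧ ∀ S ∈ P, IsDominating G S

/-- `dp G i` is the number of domatic partitions of `G` with exactly `i` parts. -/
noncomputable def dp {V : Type*} (G : SimpleGraph V) (i : ℕ) : ℕ :=
  {P : Set (Set V) | IsDomaticPartition G P ∧ P.ncard = i}.ncard

open SimpleGraph

def Fb (g : ℕ → Bool) : ℕ → Bool
  | 0 => true
  | k + 1 => xor (g k) (Fb g k)

def extg {m : ℕ} (g : Fin (m + 1) → Bool) : ℕ → Bool :=
  fun i => if h : i < m + 1 then g ⟨i, h⟩ else false

def NoFF (m : ℕ) (g : Fin (m + 1) → Bool) : Prop :=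
  ∀ i < m, extg g i = true ∨ extg g (i + 1) = true

def Good (m : ℕ) (g : Fin (m + 1) → Bool) : Prop :=
  extg g 0 = true ∧ extg g m = true ∧ NoFF m g

lemma extg_lt {m : ℕ} (g : Fin (m + 1) → Bool) (i : ℕ) (h : i < m + 1) :
    extg g i = g ⟨i, h⟩ := dif_pos h

lemma extg_cons_zero {m : ℕ} (b : Bool) (h : Fin (m + 1) → Bool) :
    extg (Fin.cons b h : Fin (m + 2) → Bool) 0 = b := by
  rw [extg_lt _ 0 (by omega)]; rfl

lemma extg_cons_succ {m : ℕ} (b : Bool) (h : Fin (m + 1) → Bool) (i : ℕ) :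
    extg (Fin.cons b h : Fin (m + 2) → Bool) (i + 1) = extg h i := by
  by_cases hi : i < m + 1
  · rw [extg_lt _ _ (by omega : i + 1 < m + 2), extg_lt _ _ hi]
    have : (⟨i + 1, by omega⟩ : Fin (m + 2)) = Fin.succ ⟨i, hi⟩ := rfl
    rw [this, Fin.cons_succ]
  · rw [extg, extg, dif_neg (by omega), dif_neg hi]

lemma noFF_cons {m : ℕ} (b : Bool) (h : Fin (m + 1) → Bool) :
    NoFF (m + 1) (Fin.cons b h) ↔ (b = true ∨ extg h 0 = true) ∧ NoFF m h := by
  constructor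
  · intro H
    refine ⟨?_, fun i hi => ?_⟩
    · have := H 0 (by omega)
      rwa [extg_cons_zero, extg_cons_succ] at this
    · have := H (i + 1) (by omega)
      rwa [extg_cons_succ, extg_cons_succ] at this
  · rintro ⟨H0, H⟩ i hi
    match i with
    | 0 => rwa [extg_cons_zero, extg_cons_succ]
    | j + 1 => rw [extg_cons_succ, extg_cons_succ]; exact H j (by omega)

def Tset (m : ℕ) : Set (Fin (m + 1) → Bool) := {g | NoFF m g ∧ extg g m = true}
def Sset (m : ℕ) : Set (Fin (m + 1) → Bool) := {g | Good m g}

lemma Tset_succ (m : ℕ) :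
    Tset (m + 1) = (Fin.cons true '' Tset m) ∪ (Fin.cons false '' (Tset m ∩ {h | extg h 0 = true})) := by
  ext g
  rw [← Fin.cons_self_tail g]
  set b := g 0
  set h := Fin.tail g with hh
  constructor
  · rintro ⟨hno, hlast⟩
    rw [noFF_cons] at hno
    rw [extg_cons_succ] at hlast
    cases hb : b with
    | true => exact Or.inl ⟨h, ⟨hno.2, hlast⟩, rfl⟩
    | false =>
      refine Or.inr ⟨h, ⟨⟨hno.2, hlast⟩, ?_⟩, rfl⟩
      rcases hno.1 with h1 | h1
      · rw [hb] at h1; exact absurd h1 (by simp)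
      · exact h1
  · rintro (⟨h', ⟨hno, hlast⟩, he⟩ | ⟨h', ⟨⟨hno, hlast⟩, h0⟩, he⟩) <;> rw [← he] <;>
      exact ⟨(noFF_cons _ _).2 ⟨by first | exact Or.inl rfl | exact Or.inr h0, hno⟩,
        by rwa [extg_cons_succ]⟩

lemma Sset_succ (m : ℕ) :
    Sset (m + 1) = Fin.cons true '' Tset m := by
  ext g
  rw [← Fin.cons_self_tail g]
  set b := g 0
  set h := Fin.tail g
  constructor
  · rintro ⟨h0, hlast, hno⟩
    rw [extg_cons_zero] at h0
    rw [extg_cons_succ] at hlast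
    rw [noFF_cons] at hno
    exact ⟨h, ⟨hno.2, hlast⟩, by rw [h0]⟩
  · rintro ⟨h', ⟨hno, hlast⟩, he⟩
    rw [← he]
    exact ⟨extg_cons_zero _ _, by rwa [extg_cons_succ], (noFF_cons _ _).2 ⟨Or.inl rfl, hno⟩⟩

lemma Tset_inter (m : ℕ) : Tset m ∩ {h | extg h 0 = true} = Sset m := by
  ext g; simp only [Tset, Sset, Good, Set.mem_inter_iff, Set.mem_setOf_eq]; tauto

lemma cons_img_disjoint {m : ℕ} (A B : Set (Fin (m + 1) → Bool)) :
    Disjoint (Fin.cons true '' A) ((Fin.cons false '' B : Set (Fin (m + 2) → Bool))) := by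
  rw [Set.disjoint_left]
  rintro a ⟨h, _, rfl⟩ ⟨h', _, heq⟩
  have := congrFun heq 0
  simp at this

lemma tc_succ (m : ℕ) : (Tset (m + 1)).ncard = (Tset m).ncard + (Sset m).ncard := by
  rw [Tset_succ, Tset_inter, Set.ncard_union_eq (cons_img_disjoint _ _) (Set.toFinite _)
    (Set.toFinite _), Set.ncard_image_of_injective _ (Fin.cons_right_injective _),
    Set.ncard_image_of_injective _ (Fin.cons_right_injective _)]

lemma sc_succ (m : ℕ) : (Sset (m + 1)).ncard = (Tset m).ncard := by
  rw [Sset_succ, Set.ncard_image_of_injective _ (Fin.cons_right_injective _)]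

lemma Tset_zero : Tset 0 = {fun _ => true} := by
  ext g
  simp only [Tset, NoFF, Set.mem_setOf_eq, Set.mem_singleton_iff]
  constructor
  · rintro ⟨-, h0⟩
    funext j
    have hj : j = ⟨0, by omega⟩ := Fin.ext (by omega)
    rw [hj, ← extg_lt g 0 (by omega), h0]
  · rintro rfl
    exact ⟨fun i hi => absurd hi (by omega), by rw [extg_lt _ 0 (by omega)]⟩

lemma Sset_zero : Sset 0 = {fun _ => true} := by
  rw [← Tset_inter, Tset_zero]
  ext g
  simp only [Set.mem_inter_iff, Set.mem_singleton_iff, Set.mem_setOf_eq]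
  constructor
  · tauto
  · rintro rfl
    exact ⟨rfl, by rw [extg_lt _ 0 (by omega)]⟩

lemma sc_tc (m : ℕ) : (Sset m).ncard = Nat.fib (m + 1) ∧ (Tset m).ncard = Nat.fib (m + 2) := by
  induction m with
  | zero => rw [Tset_zero, Sset_zero]; simp
  | succ k ih =>
    refine ⟨by rw [sc_succ, ih.2], ?_⟩
    rw [tc_succ, ih.1, ih.2,
      show Nat.fib (k + 1 + 2) = Nat.fib (k + 1) + Nat.fib (k + 2) from by rw [Nat.fib_add_two]]
    omega


def Sg {m : ℕ} (g : Fin (m + 1) → Bool) : Set (Fin (m + 2)) :=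
  {v | Fb (extg g) v.val = true}

def Phi {m : ℕ} (g : Fin (m + 1) → Bool) : Set (Set (Fin (m + 2))) :=
  {Sg g, (Sg g)ᶜ}

lemma Fb_succ (e : ℕ → Bool) (k : ℕ) : Fb e (k + 1) = xor (e k) (Fb e k) := rfl

lemma xor_recover (a b : Bool) : xor (xor a b) b = a := by cases a <;> cases b <;> rfl

lemma zero_mem_Sg {m : ℕ} (g : Fin (m + 1) → Bool) : (0 : Fin (m + 2)) ∈ Sg g := by
  show Fb (extg g) (0 : Fin (m + 2)).val = true
  rfl

lemma Sg_injective {m : ℕ} : Function.Injective (Sg (m := m)) := by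
  intro g g' h
  have hv : ∀ k, k < m + 2 → Fb (extg g) k = Fb (extg g') k := by
    intro k hk
    have := Set.ext_iff.mp h ⟨k, hk⟩
    simp only [Sg, Set.mem_setOf_eq] at this
    exact Bool.coe_iff_coe.mp this
  funext j
  have h1 : extg g j.val = extg g' j.val := by
    rw [← xor_recover (extg g j.val) (Fb (extg g) j.val), ← Fb_succ,
      ← xor_recover (extg g' j.val) (Fb (extg g') j.val), ← Fb_succ,
      hv _ (by omega), hv _ (by omega)]
  rwa [extg_lt g _ j.isLt, extg_lt g' _ j.isLt] at h1

lemma Phi_injective {m : ℕ} : Function.Injective (Phi (m := m)) := by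
  intro g g' h
  apply Sg_injective
  have : Sg g ∈ Phi g' := h ▸ Set.mem_insert _ _
  rcases this with h1 | h1
  · exact h1
  · exfalso
    have h0 := zero_mem_Sg g
    rw [h1] at h0
    exact h0 (zero_mem_Sg g')

lemma one_not_mem_Sg {m : ℕ} (g : Fin (m + 1) → Bool) (hg : Good m g) :
    (⟨1, by omega⟩ : Fin (m + 2)) ∉ Sg g := by
  show ¬ (Fb (extg g) 1 = true)
  rw [Fb_succ, hg.1]
  simp [Fb]

lemma key_of_good {m : ℕ} (g : Fin (m + 1) → Bool) (hg : Good m g) (v : Fin (m + 2)) :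
    ∃ u : Fin (m + 2), (pathGraph (m + 2)).Adj v u ∧
      Fb (extg g) u.val ≠ Fb (extg g) v.val := by
  obtain ⟨h0, hlast, hno⟩ := hg
  obtain ⟨k, hk⟩ := v
  match k with
  | 0 =>
    refine ⟨⟨1, by omega⟩, ?_, ?_⟩
    · rw [pathGraph_adj]; left; rfl
    · show Fb (extg g) 1 ≠ Fb (extg g) 0
      rw [Fb_succ, h0]
      cases Fb (extg g) 0 <;> simp
  | k + 1 =>
    by_cases hm : k + 1 = m + 1
    · refine ⟨⟨m, by omega⟩, ?_, ?_⟩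
      · rw [pathGraph_adj]; right; simp; omega
      · show Fb (extg g) m ≠ Fb (extg g) (k + 1)
        have : k + 1 = m + 1 := hm
        rw [this, Fb_succ, hlast]
        cases Fb (extg g) m <;> simp
    · -- k + 1 ≤ m, so k < m
      rcases hno k (by omega) with he | he
      · refine ⟨⟨k, by omega⟩, ?_, ?_⟩
        · rw [pathGraph_adj]; right; rfl
        · show Fb (extg g) k ≠ Fb (extg g) (k + 1)
          rw [Fb_succ, he]
          cases Fb (extg g) k <;> simp
      · refine ⟨⟨k + 2, by omega⟩, ?_, ?_⟩
        · rw [pathGraph_adj]; left; rfl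
        · show Fb (extg g) (k + 2) ≠ Fb (extg g) (k + 1)
          rw [Fb_succ (k := k + 1), he]
          cases Fb (extg g) (k + 1) <;> simp

lemma phi_mem {m : ℕ} (g : Fin (m + 1) → Bool) (hg : Good m g) :
    IsDomaticPartition (pathGraph (m + 2)) (Phi g) ∧ (Phi g).ncard = 2 := by
  have h0 := zero_mem_Sg g
  have h1 := one_not_mem_Sg g hg
  have hne : Sg g ≠ (Sg g)ᶜ := by
    intro h
    have := h ▸ h0
    exact this h0
  refine ⟨⟨⟨?_, ?_⟩, ?_⟩, Set.ncard_pair hne⟩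
  · -- ∅ ∉ Phi g
    rintro (h | h)
    · exact (h ▸ h0 : (0 : Fin (m + 2)) ∈ (∅ : Set (Fin (m + 2))))
    · have : (⟨1, by omega⟩ : Fin (m + 2)) ∈ (Sg g)ᶜ := h1
      rw [← h] at this
      exact this
  · -- exists unique block
    intro v
    by_cases hv : v ∈ Sg g
    · refine ⟨Sg g, ⟨Set.mem_insert _ _, hv⟩, ?_⟩
      rintro T ⟨rfl | rfl, hvT⟩
      · rfl
      · exact absurd hv hvT
    · refine ⟨(Sg g)ᶜ, ⟨Set.mem_insert_of_mem _ rfl, hv⟩, ?_⟩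
      rintro T ⟨rfl | rfl, hvT⟩
      · exact absurd hvT hv
      · rfl
  · -- domination
    rintro T (rfl | rfl) v hv
    · obtain ⟨u, hadj, hdne⟩ := key_of_good g hg v
      refine ⟨u, ?_, hadj⟩
      show Fb (extg g) u.val = true
      have hv' : ¬ Fb (extg g) v.val = true := hv
      rw [Bool.not_eq_true] at hv'
      cases hu : Fb (extg g) u.val
      · rw [hu, hv'] at hdne; exact absurd rfl hdne
      · rfl
    · obtain ⟨u, hadj, hdne⟩ := key_of_good g hg v
      refine ⟨u, ?_, hadj⟩
      have hv' : Fb (extg g) v.val = true := Set.not_notMem.mp hv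
      show ¬ Fb (extg g) u.val = true
      rw [Bool.not_eq_true]
      cases hu : Fb (extg g) u.val
      · rfl
      · rw [hu, hv'] at hdne; exact absurd rfl hdne

noncomputable def gOf {m : ℕ} (S : Set (Fin (m + 2))) : Fin (m + 1) → Bool :=
  fun j => @decide (¬((⟨j.val, by omega⟩ : Fin (m + 2)) ∈ S ↔ (⟨j.val + 1, by omega⟩ : Fin (m + 2)) ∈ S))
    (Classical.propDecidable _)

lemma gOf_eq_true_iff {m : ℕ} (S : Set (Fin (m + 2))) (k : ℕ) (hk : k < m + 1) :
    gOf S ⟨k, hk⟩ = true ↔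
      ¬((⟨k, by omega⟩ : Fin (m + 2)) ∈ S ↔ (⟨k + 1, by omega⟩ : Fin (m + 2)) ∈ S) := by
  exact @decide_eq_true_iff _ (Classical.propDecidable _)

lemma Fb_gOf {m : ℕ} (S : Set (Fin (m + 2))) (h0 : (0 : Fin (m + 2)) ∈ S) :
    ∀ k, ∀ hk : k < m + 2, (Fb (extg (gOf S)) k = true ↔ (⟨k, hk⟩ : Fin (m + 2)) ∈ S) := by
  intro k
  induction k with
  | zero =>
    intro hk
    have he : (⟨0, hk⟩ : Fin (m + 2)) = 0 := rfl
    simp [Fb, he, h0]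
  | succ k ih =>
    intro hk
    have hk' : k < m + 2 := by omega
    have hkm : k < m + 1 := by omega
    have ihk := ih hk'
    have hgj := gOf_eq_true_iff S k hkm
    rw [Fb_succ, extg_lt _ k hkm]
    cases hgv : gOf S ⟨k, hkm⟩ <;> cases hFk : Fb (extg (gOf S)) k <;>
      rw [hgv] at hgj <;> rw [hFk] at ihk <;> simp at hgj ihk ⊢ <;> tauto

lemma Sg_gOf {m : ℕ} (S : Set (Fin (m + 2))) (h0 : (0 : Fin (m + 2)) ∈ S) :
    Sg (gOf S) = S := by
  ext v
  have := Fb_gOf S h0 v.val v.isLt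
  rw [Fin.eta] at this
  exact this

lemma good_gOf {m : ℕ} (S : Set (Fin (m + 2)))
    (hkey : ∀ v : Fin (m + 2), ∃ u, (pathGraph (m + 2)).Adj v u ∧ (u ∈ S ↔ v ∉ S)) :
    Good m (gOf S) := by
  have hdiff : ∀ (k : ℕ) (hk : k < m + 1),
      ¬((⟨k, by omega⟩ : Fin (m + 2)) ∈ S ↔ (⟨k + 1, by omega⟩ : Fin (m + 2)) ∈ S) →
      extg (gOf S) k = true := by
    intro k hk h
    rw [extg_lt _ k hk]
    exact (gOf_eq_true_iff S k hk).mpr h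
  refine ⟨?_, ?_, ?_⟩
  · -- extg (gOf S) 0 = true
    obtain ⟨u, hadj, hiff⟩ := hkey ⟨0, by omega⟩
    rw [pathGraph_adj] at hadj
    have hu : u = ⟨1, by omega⟩ := Fin.ext (by simp at hadj ⊢; omega)
    subst hu
    exact hdiff 0 (by omega) (by tauto)
  · -- extg (gOf S) m = true
    obtain ⟨u, hadj, hiff⟩ := hkey ⟨m + 1, by omega⟩
    rw [pathGraph_adj] at hadj
    have hu : u = ⟨m, by omega⟩ := Fin.ext (by simp at hadj ⊢; omega)
    subst hu
    exact hdiff m (by omega) (by tauto)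
  · -- NoFF
    intro i hi
    obtain ⟨u, hadj, hiff⟩ := hkey ⟨i + 1, by omega⟩
    rw [pathGraph_adj] at hadj
    simp only [] at hadj
    have : u.val = i + 2 ∨ u.val = i := by simp at hadj; omega
    rcases this with hu | hu
    · right
      have hu' : u = ⟨i + 2, by omega⟩ := Fin.ext (by simp [hu])
      rw [hu'] at hiff
      exact hdiff (i + 1) (by omega) (by tauto)
    · left
      have hu' : u = ⟨i, by omega⟩ := Fin.ext (by simp [hu])
      rw [hu'] at hiff
      exact hdiff i (by omega) (by tauto)

lemma mem_image_of {m : ℕ} (S : Set (Fin (m + 2))) (h0 : (0 : Fin (m + 2)) ∈ S)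
    (hkey : ∀ v : Fin (m + 2), ∃ u, (pathGraph (m + 2)).Adj v u ∧ (u ∈ S ↔ v ∉ S)) :
    ({S, Sᶜ} : Set (Set (Fin (m + 2)))) ∈ Phi '' Sset m := by
  refine ⟨gOf S, good_gOf S hkey, ?_⟩
  rw [Phi, Sg_gOf S h0]

lemma main_eq (m : ℕ) :
    {P : Set (Set (Fin (m + 2))) | IsDomaticPartition (pathGraph (m + 2)) P ∧ P.ncard = 2}
      = Phi '' Sset m := by
  ext P
  constructor
  · rintro ⟨⟨hpart, hdom⟩, h2⟩
    obtain ⟨S, T, hST, rfl⟩ := Set.ncard_eq_two.mp h2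
    have hmem : ∀ v : Fin (m + 2), (v ∈ S ∧ v ∉ T) ∨ (v ∉ S ∧ v ∈ T) := by
      intro v
      obtain ⟨B, ⟨hBP, hvB⟩, huniq⟩ := hpart.2 v
      rcases hBP with hB | hB
      · refine Or.inl ⟨hB ▸ hvB, fun hvT => hST ?_⟩
        have h1 : T = B := huniq T ⟨Set.mem_insert_of_mem _ rfl, hvT⟩
        rw [← hB, h1]
      · have hB' : B = T := hB
        refine Or.inr ⟨fun hvS => hST ?_, hB' ▸ hvB⟩
        have h1 : S = B := huniq S ⟨Set.mem_insert _ _, hvS⟩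
        rw [h1, hB']
    have hT : T = Sᶜ := by
      ext v
      rcases hmem v with ⟨hh1, hh2⟩ | ⟨hh1, hh2⟩ <;> simp [hh1, hh2]
    subst hT
    have hkey0 : ∀ v : Fin (m + 2), ∃ u, (pathGraph (m + 2)).Adj v u ∧ (u ∈ S ↔ v ∉ S) := by
      intro v
      by_cases hv : v ∈ S
      · obtain ⟨u, huS, hadj⟩ := hdom Sᶜ (Set.mem_insert_of_mem _ rfl) v (fun h => h hv)
        exact ⟨u, hadj, by simp only [Set.mem_compl_iff] at huS; tauto⟩
      · obtain ⟨u, huS, hadj⟩ := hdom S (Set.mem_insert _ _) v hv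
        exact ⟨u, hadj, by tauto⟩
    by_cases h0 : (0 : Fin (m + 2)) ∈ S
    · exact mem_image_of S h0 hkey0
    · have h0' : (0 : Fin (m + 2)) ∈ Sᶜ := h0
      have := mem_image_of Sᶜ h0' (by
        intro v
        obtain ⟨u, hadj, hiff⟩ := hkey0 v
        exact ⟨u, hadj, by simp only [Set.mem_compl_iff]; tauto⟩)
      rw [compl_compl] at this
      rwa [Set.pair_comm] at this
  · rintro ⟨g, hg, rfl⟩
    exact phi_mem g hg

lemma dp_eq' (m : ℕ) :
    {P : Set (Set (Fin (m + 2))) | IsDomaticPartition (pathGraph (m + 2)) P ∧ P.ncard = 2}.ncard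
      = Nat.fib (m + 1) := by
  rw [main_eq, Set.ncard_image_of_injective _ Phi_injective, (sc_tc m).1]

open Filter Real goldenRatio in
lemma fib_ratio_tendsto :
    Tendsto (fun n : ℕ => (Nat.fib (n + 1) : ℝ) / (Nat.fib n : ℝ)) atTop (nhds goldenRatio) := by
  have habs : |goldenConj| < 1 := abs_lt.mpr ⟨neg_one_lt_goldenConj, by linarith [goldenConj_neg]⟩
  have hpow : Tendsto (fun n : ℕ => |goldenConj| ^ n) atTop (nhds 0) :=
    tendsto_pow_atTop_nhds_zero_of_lt_one (abs_nonneg _) habs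
  have h1 : Tendsto (fun n : ℕ => goldenConj ^ n / (Nat.fib n : ℝ)) atTop (nhds 0) := by
    apply squeeze_zero_norm' _ hpow
    filter_upwards [eventually_ge_atTop 1] with n hn
    have hfib : (1 : ℝ) ≤ (Nat.fib n : ℝ) := by
      exact_mod_cast Nat.fib_pos.mpr (by omega)
    rw [norm_div, norm_pow]
    calc ‖goldenConj‖ ^ n / ‖(Nat.fib n : ℝ)‖ ≤ ‖goldenConj‖ ^ n / 1 := by
          apply div_le_div_of_nonneg_left ?_ ?_ ?_ <;> first
            | positivity
            | (rw [Real.norm_eq_abs, abs_of_nonneg (by positivity)]; exact hfib)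
      _ = |goldenConj| ^ n := by rw [div_one, Real.norm_eq_abs]
  have h2 : Tendsto (fun n : ℕ => goldenRatio + goldenConj ^ n / (Nat.fib n : ℝ)) atTop
      (nhds goldenRatio) := by
    have := tendsto_const_nhds (x := goldenRatio) (f := (atTop : Filter ℕ)) |>.add h1
    simpa using this
  refine h2.congr' ?_
  filter_upwards [eventually_ge_atTop 1] with n hn
  have hfib : (Nat.fib n : ℝ) ≠ 0 := by
    have : 0 < Nat.fib n := Nat.fib_pos.mpr (by omega)
    exact_mod_cast this.ne'
  have hb := fib_succ_sub_goldenRatio_mul_fib n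
  rw [eq_div_iff hfib, add_mul, div_mul_cancel₀ _ hfib]
  linarith


open Filter in
/-- The ratios `dp(P_{n+1},2) / dp(P_n,2)` converge to the golden ratio
`(1 + √5)/2` as `n → ∞`. -/
theorem dp_path_ratio_tendsto_goldenRatio :
    Filter.Tendsto
      (fun n : ℕ =>
        (dp (SimpleGraph.pathGraph (n + 1)) 2 : ℝ) /
          (dp (SimpleGraph.pathGraph n) 2 : ℝ))
      Filter.atTop (nhds ((1 + Real.sqrt 5) / 2)) := by
  have hdp : ∀ n : ℕ, 2 ≤ n → dp (SimpleGraph.pathGraph n) 2 = Nat.fib (n - 1) := by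
    intro n hn
    obtain ⟨m, rfl⟩ : ∃ m, n = m + 2 := ⟨n - 2, by omega⟩
    show {P : Set (Set (Fin (m + 2))) | IsDomaticPartition (pathGraph (m + 2)) P
      ∧ P.ncard = 2}.ncard = _
    rw [dp_eq' m]
    rfl
  have H : Tendsto (fun n : ℕ => (Nat.fib n : ℝ) / (Nat.fib (n - 1) : ℝ)) atTop
      (nhds ((1 + Real.sqrt 5) / 2)) := by
    rw [← Filter.tendsto_add_atTop_iff_nat 1]
    have he : (fun n : ℕ => (Nat.fib (n + 1) : ℝ) / (Nat.fib (n + 1 - 1) : ℝ))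
        = fun n : ℕ => (Nat.fib (n + 1) : ℝ) / (Nat.fib n : ℝ) := by
      funext n; simp
    rw [he]
    exact fib_ratio_tendsto
  refine H.congr' ?_
  filter_upwards [eventually_ge_atTop 2] with n hn
  rw [hdp (n + 1) (by omega), hdp n hn]
  simp
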